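/- arXiv:2604.27380 — 2 statements merged into one kernel-verified Lean document; each statement's English description precedes it below -/
import Mathlib

section
/- Let 𝕏, 𝕌 be compact metric spaces and N ≥ 1. The multifunction μ ↦ Û(μ) := { (1/N)∑_{i=1}^N δ_{(x^i,u^i)} : (1/N)∑_{i=1}^N δ_{x^i} = μ } from the set of N-point empirical measures on 𝕏 to subsets of 𝒫(𝕏 × 𝕌) is upper semicontinuous: if μ_k → μ weakly with each μ_k an N-point empirical measure, and θ_k ∈ Û(μ_k) for each k, then some subsequence of (θ_k) converges weakly to an element of Û(μ). -/
open MeasureTheory Finset Filter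
open scoped ENNReal

/-- The `N`-point empirical (probability) measure of a tuple `x : Fin N → α`. -/
noncomputable def empirical {α : Type*} [MeasurableSpace α] {N : ℕ} [NeZero N]
    (x : Fin N → α) : ProbabilityMeasure α :=
  ⟨((N : ℝ≥0∞))⁻¹ • ∑ i : Fin N, Measure.dirac (x i), by
    constructor
    simp [Measure.smul_apply, Measure.finset_sum_apply, smul_eq_mul,
      ENNReal.inv_mul_cancel, NeZero.ne]⟩


open BoundedContinuousFunction in
lemma integral_empirical {α : Type*} [TopologicalSpace α] [MeasurableSpace α]
    [OpensMeasurableSpace α] [MeasurableSingletonClass α] {N : ℕ} [NeZero N]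
    (x : Fin N → α) (f : α →ᵇ ℝ) :
    ∫ a, f a ∂(empirical x : Measure α) = (N : ℝ)⁻¹ * ∑ i : Fin N, f (x i) := by
  have hsm : ∀ i ∈ Finset.univ, Integrable (fun a => f a) (Measure.dirac ((x : Fin N → α) i)) :=
    fun i _ => f.integrable _
  rw [show ((empirical x : Measure α)) = ((N : ℝ≥0∞))⁻¹ • ∑ i : Fin N, Measure.dirac (x i) from rfl,
    integral_smul_measure, integral_finset_sum_measure hsm]
  simp [integral_dirac, f.continuous.measurable, ENNReal.toReal_inv, smul_eq_mul]

lemma tendsto_empirical {α : Type*} [TopologicalSpace α] [MeasurableSpace α]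
    [OpensMeasurableSpace α] [MeasurableSingletonClass α] {N : ℕ} [NeZero N]
    {xs : ℕ → Fin N → α} {x : Fin N → α}
    (h : Tendsto xs atTop (nhds x)) :
    Tendsto (fun k => empirical (xs k)) atTop (nhds (empirical x)) := by
  rw [ProbabilityMeasure.tendsto_iff_forall_integral_tendsto]
  intro f
  simp only [integral_empirical]
  apply Tendsto.const_mul
  apply tendsto_finset_sum
  intro i _
  exact (f.continuous.tendsto _).comp (((continuous_apply i).tendsto x).comp h)

/-- The constraint set `Û(μ)`: joint `N`-point empirical measures on `𝕏 × 𝕌` whose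
`𝕏`-empirical measure equals `μ`. -/
def actionSet {𝕏 𝕌 : Type*} [MeasurableSpace 𝕏] [MeasurableSpace 𝕌]
    (N : ℕ) [NeZero N] (μ : ProbabilityMeasure 𝕏) : Set (ProbabilityMeasure (𝕏 × 𝕌)) :=
  {θ | ∃ (x : Fin N → 𝕏) (u : Fin N → 𝕌),
    empirical (fun i => (x i, u i)) = θ ∧ empirical x = μ}

/-- the multifunction `μ ↦ Û(μ)` is upper semicontinuous on `N`-point
empirical measures: if `μ_k → μ` weakly with every `μ_k` (and `μ`) an `N`-point empirical
measure and `θ_k ∈ Û(μ_k)`, then some subsequence of `(θ_k)` converges weakly to an element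
of `Û(μ)`. -/
theorem actionSet_upper_semicontinuous {𝕏 𝕌 : Type*}
    [MetricSpace 𝕏] [CompactSpace 𝕏] [MeasurableSpace 𝕏] [BorelSpace 𝕏]
    [MetricSpace 𝕌] [CompactSpace 𝕌] [MeasurableSpace 𝕌] [BorelSpace 𝕌]
    (N : ℕ) [NeZero N]
    (μseq : ℕ → ProbabilityMeasure 𝕏) (μ : ProbabilityMeasure 𝕏)
    (hemp : ∀ k, ∃ x : Fin N → 𝕏, empirical x = μseq k)
    (hμ : ∃ x : Fin N → 𝕏, empirical x = μ)
    (hconv : Tendsto μseq atTop (nhds μ))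
    (θ : ℕ → ProbabilityMeasure (𝕏 × 𝕌)) (hθ : ∀ k, θ k ∈ actionSet N (μseq k)) :
    ∃ (φ : ℕ → ℕ) (θ₀ : ProbabilityMeasure (𝕏 × 𝕌)), StrictMono φ ∧
      θ₀ ∈ actionSet N μ ∧ Tendsto (fun k => θ (φ k)) atTop (nhds θ₀) := by
  choose x u hxu hx using hθ
  set p : ℕ → Fin N → 𝕏 × 𝕌 := fun k i => (x k i, u k i) with hp
  obtain ⟨q, -, φ, hφ, hq⟩ := isCompact_univ.tendsto_subseq
    (x := p) (fun k => Set.mem_univ _)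
  refine ⟨φ, empirical q, hφ, ?_, ?_⟩
  · refine ⟨fun i => (q i).1, fun i => (q i).2, by simp, ?_⟩
    have h1 : Tendsto (fun k => fun i => (p (φ k) i).1) atTop (nhds (fun i => (q i).1)) := by
      rw [tendsto_pi_nhds]
      intro i
      exact (continuous_fst.tendsto _).comp ((tendsto_pi_nhds.mp hq) i)
    have h2 : Tendsto (fun k => empirical (fun i => (p (φ k) i).1)) atTop
        (nhds (empirical (fun i => (q i).1))) := tendsto_empirical h1
    have h3 : Tendsto (fun k => empirical (fun i => (p (φ k) i).1)) atTop (nhds μ) := by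
      have : (fun k => empirical (fun i => (p (φ k) i).1)) = fun k => μseq (φ k) := by
        funext k; simpa using hx (φ k)
      rw [this]
      exact hconv.comp hφ.tendsto_atTop
    exact tendsto_nhds_unique h2 h3
  · have := tendsto_empirical hq
    have heq : (fun k => empirical (p (φ k))) = fun k => θ (φ k) := by
      funext k; simpa using hxu (φ k)
    simp only [Function.comp] at this
    rwa [heq] at this
end

section
/- Let 𝕏, 𝕌 be compact metric spaces, let 𝒫(𝕏)^M denote M-tuples of probability measures, and let 𝒯 : 𝕏 × 𝕌 × 𝒫(𝕏)^M → 𝒫(𝕏) be jointly continuous (with weak topologies on measure spaces). Define F(μ^{1:M}, θ)(A) := ∫_{𝕏×𝕌} 𝒯(A | x, u, μ^{1:M}) θ(dx × du) for θ ∈ 𝒫(𝕏 × 𝕌). Then F : 𝒫(𝕏)^M × 𝒫(𝕏 × 𝕌) → 𝒫(𝕏) is jointly continuous. -/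
open MeasureTheory Filter

/-- for compact metric `𝕏, 𝕌` and a jointly (weakly) continuous kernel
`𝒯 : 𝕏 × 𝕌 × 𝒫(𝕏)^M → 𝒫(𝕏)`, the map `F(μ^{1:M}, θ) = ∫ 𝒯(·|x,u,μ^{1:M}) θ(dx du)` is jointly
continuous: along any weakly convergent sequences `(μ^{1:M}_n, θ_n) → (μ^{1:M}, θ)`, the
measures `F(μ^{1:M}_n, θ_n)` converge weakly to `F(μ^{1:M}, θ)` (tested against all bounded
continuous functions). -/
theorem meanField_transition_jointly_continuous {𝕏 𝕌 : Type*}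
    [MetricSpace 𝕏] [CompactSpace 𝕏] [MeasurableSpace 𝕏] [BorelSpace 𝕏]
    [MetricSpace 𝕌] [CompactSpace 𝕌] [MeasurableSpace 𝕌] [BorelSpace 𝕌] {M : ℕ}
    (T : 𝕏 → 𝕌 → (Fin M → ProbabilityMeasure 𝕏) → ProbabilityMeasure 𝕏)
    (hT : Continuous (fun q : 𝕏 × 𝕌 × (Fin M → ProbabilityMeasure 𝕏) =>
      T q.1 q.2.1 q.2.2))
    (μs : ℕ → Fin M → ProbabilityMeasure 𝕏) (μs₀ : Fin M → ProbabilityMeasure 𝕏)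
    (hμ : Tendsto μs atTop (nhds μs₀))
    (θ : ℕ → ProbabilityMeasure (𝕏 × 𝕌)) (θ₀ : ProbabilityMeasure (𝕏 × 𝕌))
    (hθ : Tendsto θ atTop (nhds θ₀)) :
    ∀ f : BoundedContinuousFunction 𝕏 ℝ,
      Tendsto
        (fun n => ∫ p : 𝕏 × 𝕌,
            (∫ y, f y ∂(T p.1 p.2 (μs n) : Measure 𝕏)) ∂(θ n : Measure (𝕏 × 𝕌)))
        atTop
        (nhds (∫ p : 𝕏 × 𝕌,
            (∫ y, f y ∂(T p.1 p.2 μs₀ : Measure 𝕏)) ∂(θ₀ : Measure (𝕏 × 𝕌)))) := by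

  intro f
  -- the jointly continuous integrand
  have hgc : Continuous (fun q : (Fin M → ProbabilityMeasure 𝕏) × (𝕏 × 𝕌) =>
      ∫ y, f y ∂(T q.2.1 q.2.2 q.1 : Measure 𝕏)) := by
    have h1 := MeasureTheory.ProbabilityMeasure.continuous_integral_boundedContinuousFunction
      (X := 𝕏) f
    have h2 : Continuous (fun q : (Fin M → ProbabilityMeasure 𝕏) × (𝕏 × 𝕌) =>
        T q.2.1 q.2.2 q.1) := by
      exact hT.comp ((continuous_snd.fst).prodMk ((continuous_snd.snd).prodMk continuous_fst))
    exact h1.comp h2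
  set G : C((Fin M → ProbabilityMeasure 𝕏) × (𝕏 × 𝕌), ℝ) := ⟨_, hgc⟩ with hG
  -- bounded continuous versions of the inner integral
  set h : (Fin M → ProbabilityMeasure 𝕏) → BoundedContinuousFunction (𝕏 × 𝕌) ℝ :=
    fun ν => BoundedContinuousFunction.mkOfCompact (G.curry ν) with hh
  have hhc : Continuous h :=
    ((ContinuousMap.isometryEquivBoundedOfCompact (𝕏 × 𝕌) ℝ).continuous).comp
      G.curry.continuous
  have hnorm : Tendsto (fun n => dist (h (μs n)) (h μs₀)) atTop (nhds 0) := by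
    have := (hhc.tendsto μs₀).comp hμ
    exact (tendsto_iff_dist_tendsto_zero).mp this
  -- integrability
  have hint : ∀ (g : BoundedContinuousFunction (𝕏 × 𝕌) ℝ) (ϑ : ProbabilityMeasure (𝕏 × 𝕌)),
      Integrable (fun p => g p) (ϑ : Measure (𝕏 × 𝕌)) := fun g ϑ => g.integrable _
  -- convergence against the limit integrand
  have hlim : Tendsto (fun n => ∫ p, (h μs₀) p ∂(θ n : Measure (𝕏 × 𝕌))) atTop
      (nhds (∫ p, (h μs₀) p ∂(θ₀ : Measure (𝕏 × 𝕌)))) :=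
    MeasureTheory.ProbabilityMeasure.tendsto_iff_forall_integral_tendsto.mp hθ (h μs₀)
  have key : Tendsto (fun n => ∫ p, (h (μs n)) p ∂(θ n : Measure (𝕏 × 𝕌))) atTop
      (nhds (∫ p, (h μs₀) p ∂(θ₀ : Measure (𝕏 × 𝕌)))) := by
    rw [tendsto_iff_dist_tendsto_zero]
    apply squeeze_zero (fun n => dist_nonneg)
      (g := fun n => dist (h (μs n)) (h μs₀)
        + dist (∫ p, (h μs₀) p ∂(θ n : Measure (𝕏 × 𝕌)))
            (∫ p, (h μs₀) p ∂(θ₀ : Measure (𝕏 × 𝕌))))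
    · intro n
      refine le_trans (dist_triangle _ (∫ p, (h μs₀) p ∂(θ n : Measure (𝕏 × 𝕌))) _) ?_
      gcongr
      rw [dist_eq_norm, ← integral_sub (hint _ _) (hint _ _)]
      calc ‖∫ p, ((h (μs n)) p - (h μs₀) p) ∂(θ n : Measure (𝕏 × 𝕌))‖
          ≤ ‖h (μs n) - h μs₀‖ := by
            have := (h (μs n) - h μs₀).norm_integral_le_norm (θ n : Measure (𝕏 × 𝕌))
            simpa using this
        _ = dist (h (μs n)) (h μs₀) := (dist_eq_norm _ _).symm
    · have : Tendsto (fun n => dist (∫ p, (h μs₀) p ∂(θ n : Measure (𝕏 × 𝕌)))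
          (∫ p, (h μs₀) p ∂(θ₀ : Measure (𝕏 × 𝕌)))) atTop (nhds 0) :=
        tendsto_iff_dist_tendsto_zero.mp hlim
      simpa using hnorm.add this
  exact key
end
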